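/- Let j ≥ 1/2 be a half-integer or integer and d = 2j+1. Then B_{j,2} = 4j − 1 − √(1 − 4j + 8j²). -/

import Mathlib

open Matrix Kronecker BigOperators Finset
open scoped ComplexOrder

/-- Expectation value ⟨A⟩_ρ = Re tr(ρ A). -/
noncomputable def expval {n : Type*} [Fintype n] (ρ A : Matrix n n ℂ) : ℝ :=
  ((ρ * A).trace).re

/-- A density matrix: positive semidefinite with unit trace. -/
def IsDensityMatrix {n : Type*} [Fintype n] (ρ : Matrix n n ℂ) : Prop :=
  ρ.PosSemidef ∧ ρ.trace = 1

/-- The projector |v⟩⟨v| associated to a vector. -/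
noncomputable def pureState {n : Type*} (v : n → ℂ) : Matrix n n ℂ :=
  Matrix.vecMulVec v (star v)

/-- A normalized vector. -/
def IsUnitVec {n : Type*} [Fintype n] (v : n → ℂ) : Prop :=
  ∑ i, Complex.normSq (v i) = 1

/-- The canonical Hermitian operator basis of ℂ^d, indexed by pairs (j,k):
diagonal operators for j = k, real operators for j < k, imaginary operators for j > k. -/
noncomputable def canonG (d : ℕ) : Fin d × Fin d → Matrix (Fin d) (Fin d) ℂ := fun μ =>
  if μ.1 = μ.2 then Matrix.single μ.1 μ.1 1
  else if μ.1 < μ.2 then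
    ((Real.sqrt 2 : ℂ))⁻¹ • (Matrix.single μ.1 μ.2 1 + Matrix.single μ.2 μ.1 1)
  else
    (Complex.I * ((Real.sqrt 2 : ℂ))⁻¹) •
      (Matrix.single μ.2 μ.1 1 - Matrix.single μ.1 μ.2 1)

/-- Covariance matrix of a family of observables w.r.t. a state ρ. -/
noncomputable def covMat {n K : Type*} [Fintype n] (ρ : Matrix n n ℂ)
    (M : K → Matrix n n ℂ) : Matrix K K ℝ :=
  Matrix.of fun j k =>
    (1/2 : ℝ) * expval ρ (M j * M k + M k * M j) - expval ρ (M j) * expval ρ (M k)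

/-- The local observables (g_μ ⊗ 1, 1 ⊗ g_ν) on the bipartite space. -/
noncomputable def bipObs (d : ℕ) :
    (Fin d × Fin d) ⊕ (Fin d × Fin d) → Matrix (Fin d × Fin d) (Fin d × Fin d) ℂ :=
  Sum.elim (fun μ => canonG d μ ⊗ₖ (1 : Matrix (Fin d) (Fin d) ℂ))
           (fun ν => (1 : Matrix (Fin d) (Fin d) ℂ) ⊗ₖ canonG d ν)

/-- The full covariance matrix Γ_ρ of the canonical bipartite observables. -/
noncomputable def GammaCM (d : ℕ) (ρ : Matrix (Fin d × Fin d) (Fin d × Fin d) ℂ) :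
    Matrix ((Fin d × Fin d) ⊕ (Fin d × Fin d)) ((Fin d × Fin d) ⊕ (Fin d × Fin d)) ℝ :=
  covMat ρ (bipObs d)

/-- The cross-covariance block X_ρ. -/
noncomputable def crossCov (d : ℕ) (ρ : Matrix (Fin d × Fin d) (Fin d × Fin d) ℂ) :
    Matrix (Fin d × Fin d) (Fin d × Fin d) ℝ :=
  Matrix.of fun μ ν =>
    expval ρ (canonG d μ ⊗ₖ canonG d ν)
      - expval ρ (canonG d μ ⊗ₖ 1) * expval ρ ((1 : Matrix (Fin d) (Fin d) ℂ) ⊗ₖ canonG d ν)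

/-- Reduced state on the first subsystem. -/
noncomputable def redA (d : ℕ) (ρ : Matrix (Fin d × Fin d) (Fin d × Fin d) ℂ) :
    Matrix (Fin d) (Fin d) ℂ :=
  Matrix.of fun i j => ∑ k, ρ (i, k) (j, k)

/-- Reduced state on the second subsystem. -/
noncomputable def redB (d : ℕ) (ρ : Matrix (Fin d × Fin d) (Fin d × Fin d) ℂ) :
    Matrix (Fin d) (Fin d) ℂ :=
  Matrix.of fun i j => ∑ k, ρ (k, i) (k, j)

/-- Purity tr(σ²) (real part). -/
noncomputable def purity {n : Type*} [Fintype n] (σ : Matrix n n ℂ) : ℝ :=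
  ((σ * σ).trace).re

/-- Trace norm of a real matrix: sum of its singular values, i.e. tr √(XᵀX). -/
noncomputable def traceNorm {n : Type*} [Fintype n] [DecidableEq n] (X : Matrix n n ℝ) : ℝ :=
  ((Matrix.isHermitian_conjTranspose_mul_self X).eigenvectorUnitary.1 *
      Matrix.diagonal ((RCLike.ofReal : ℝ → ℝ) ∘ (Real.sqrt ·) ∘ (Matrix.isHermitian_conjTranspose_mul_self X).eigenvalues) *
      (star (Matrix.isHermitian_conjTranspose_mul_self X).eigenvectorUnitary : Matrix n n ℝ)).trace

/-- Schmidt rank of a pure state vector is the rank of its coefficient matrix. -/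
def SchmidtRankLE (d r : ℕ) (v : Fin d × Fin d → ℂ) : Prop :=
  (Matrix.of fun j k : Fin d => v (j, k)).rank ≤ r

/-- Schmidt number at most r. -/
def SchmidtNumberLE (d r : ℕ) (ρ : Matrix (Fin d × Fin d) (Fin d × Fin d) ℂ) : Prop :=
  ∃ (n : ℕ) (p : Fin n → ℝ) (ψ : Fin n → (Fin d × Fin d → ℂ)),
    (∀ k, 0 ≤ p k) ∧ (∑ k, p k = 1) ∧ (∀ k, IsUnitVec (ψ k)) ∧
    (∀ k, SchmidtRankLE d r (ψ k)) ∧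
    ρ = ∑ k, (p k : ℂ) • pureState (ψ k)

/-- Variance of an observable in a state. -/
noncomputable def varState {n : Type*} [Fintype n] (σ A : Matrix n n ℂ) : ℝ :=
  expval σ (A * A) - (expval σ A)^2

/-- The magnetic quantum number m_k = k - j - 1 (0-indexed: k - (d-1)/2). -/
noncomputable def spinM (d : ℕ) (k : Fin d) : ℝ := (k : ℝ) - ((d : ℝ) - 1) / 2

/-- The raising operator j₊ for spin j = (d-1)/2. -/
noncomputable def spinPlus (d : ℕ) : Matrix (Fin d) (Fin d) ℂ :=
  Matrix.of fun a b => if (a : ℕ) = (b : ℕ) + 1 then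
    (Real.sqrt (((d : ℝ) - 1) / 2 * (((d : ℝ) - 1) / 2 + 1) - spinM d b * (spinM d b + 1)) : ℂ)
  else 0

/-- The spin operator j_x = (j₊ + j₋)/2. -/
noncomputable def spinX (d : ℕ) : Matrix (Fin d) (Fin d) ℂ :=
  (1 / 2 : ℂ) • (spinPlus d + (spinPlus d)ᴴ)

/-- The spin operator j_y = (j₊ - j₋)/(2i). -/
noncomputable def spinY (d : ℕ) : Matrix (Fin d) (Fin d) ℂ :=
  (-Complex.I / 2) • (spinPlus d - (spinPlus d)ᴴ)

/-- The spin operator j_z. -/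
noncomputable def spinZ (d : ℕ) : Matrix (Fin d) (Fin d) ℂ :=
  Matrix.diagonal fun k => (spinM d k : ℂ)

/-- The quantity Σ_{k=1}^{d-1} k(d-k)(√λ_k - √λ_{k+1})² (0-indexed λ). -/
noncomputable def spinVarSum (d : ℕ) (lam : Fin d → ℝ) : ℝ :=
  ∑ k ∈ Finset.range (d - 1),
    ((k : ℝ) + 1) * ((d : ℝ) - ((k : ℝ) + 1)) *
      (Real.sqrt (if h : k < d then lam ⟨k, h⟩ else 0) -
       Real.sqrt (if h : k + 1 < d then lam ⟨k + 1, h⟩ else 0)) ^ 2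

/-- The bound B_{j,r}: infimum of Σ_k k(d-k)(√λ_k - √λ_{k+1})² over probability
vectors λ ∈ ℝ^d with at most r nonzero entries, where d = 2j+1. -/
noncomputable def Bspin (d r : ℕ) : ℝ :=
  sInf { v : ℝ | ∃ lam : Fin d → ℝ, (∀ k, 0 ≤ lam k) ∧ (∑ k, lam k = 1) ∧
    (Finset.univ.filter fun k => lam k ≠ 0).card ≤ r ∧ v = spinVarSum d lam }

private lemma factA (D k s : ℝ) (hk0 : 0 ≤ k) (hk1 : k ≤ D - 1)
    (hs : D - 2 ≤ s) :
    2*D - 3 - s ≤ k*(D-k) + (k+1)*(D-k-1) := by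
  nlinarith [mul_nonneg hk0 (by linarith : (0:ℝ) ≤ D - 1 - k)]

private lemma quadPSD (A C w x y : ℝ) (hA : 0 ≤ A) (hC : 0 ≤ C)
    (h : w^2 ≤ A * C) (hw : 0 ≤ w) :
    2 * w * x * y ≤ A * x^2 + C * y^2 := by
  rcases eq_or_lt_of_le hA with hA0 | hA0
  · have hw0 : w = 0 := by nlinarith
    subst hw0
    nlinarith [mul_nonneg hC (sq_nonneg y), mul_nonneg hA (sq_nonneg x)]
  · nlinarith [sq_nonneg (A*x - w*y), mul_nonneg (sub_nonneg.2 h) (sq_nonneg y)]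

private lemma factB (D p s : ℝ) (hp0 : 0 ≤ p) (hp1 : p ≤ D - 2)
    (hs : D - 2 ≤ s) (hs2 : s^2 = 2*D^2 - 6*D + 5) :
    ((p+1)*(D-p-1))^2
      ≤ (p*(D-p) + (p+1)*(D-p-1) - (2*D-3-s))
        * ((p+1)*(D-p-1) + (p+2)*(D-p-2) - (2*D-3-s)) := by
  nlinarith [mul_nonneg (mul_nonneg hp0 (by linarith : (0:ℝ) ≤ D-2-p)) (by linarith : (0:ℝ) ≤ s - (D-2)),
    sq_nonneg (p*(D-2-p)),
    mul_nonneg (mul_nonneg hp0 (by linarith : (0:ℝ) ≤ D-2-p)) (by linarith : (0:ℝ) ≤ D-1)]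

private lemma finishIneq (cp cp1 wp B x y : ℝ) (h1 : x^2 + y^2 = 1)
    (h2 : 2*wp*x*y ≤ (cp - B)*x^2 + (cp1 - B)*y^2) :
    B ≤ cp * x^2 + cp1 * y^2 - 2*(wp*(x*y)) := by
  have hB : B = B * (x^2+y^2) := by rw [h1, mul_one]
  nlinarith [h2, hB]

private lemma lowerB (d : ℕ) (hd : 2 ≤ d) (s : ℝ) (hs0 : 0 ≤ s)
    (hsD : (d:ℝ) - 2 ≤ s) (hs2 : s^2 = 2*(d:ℝ)^2 - 6*(d:ℝ) + 5)
    (lam : Fin d → ℝ) (h0 : ∀ k, 0 ≤ lam k) (h1 : ∑ k, lam k = 1)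
    (h2 : (Finset.univ.filter fun k => lam k ≠ 0).card ≤ 2) :
    2*(d:ℝ) - 3 - s ≤ spinVarSum d lam := by
  set g : ℕ → ℝ := fun k => if h : k < d then lam ⟨k, h⟩ else 0 with hgdef
  have hgval : ∀ (k : ℕ) (h : k < d), g k = lam ⟨k, h⟩ := fun k h => dif_pos h
  have hg0 : ∀ k, 0 ≤ g k := by
    intro k; by_cases h : k < d
    · rw [hgval k h]; exact h0 _
    · simp [hgdef, h]
  set w : ℕ → ℝ := fun k => ((k:ℝ)+1) * ((d:ℝ)-(k:ℝ)-1) with hwdef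
  set c : ℕ → ℝ := fun k => (k:ℝ)*((d:ℝ)-(k:ℝ)) + ((k:ℝ)+1)*((d:ℝ)-(k:ℝ)-1) with hcdef
  have hsv : spinVarSum d lam
      = ∑ k ∈ range (d-1), w k * (Real.sqrt (g k) - Real.sqrt (g (k+1)))^2 := by
    unfold spinVarSum
    refine Finset.sum_congr rfl fun k _ => ?_
    simp only [hwdef, hgdef]; ring
  have hsplit : spinVarSum d lam
      = (∑ k ∈ range (d-1), (w k * g k + w k * g (k+1)))
        - 2 * ∑ k ∈ range (d-1), w k * (Real.sqrt (g k) * Real.sqrt (g (k+1))) := by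
    rw [hsv, Finset.mul_sum, ← Finset.sum_sub_distrib]
    refine Finset.sum_congr rfl fun k _ => ?_
    have e1 : Real.sqrt (g k) ^ 2 = g k := Real.sq_sqrt (hg0 k)
    have e2 : Real.sqrt (g (k+1)) ^ 2 = g (k+1) := Real.sq_sqrt (hg0 (k+1))
    linear_combination (w k) * e1 + (w k) * e2
  obtain ⟨m, rfl⟩ : ∃ m, d = m + 2 := ⟨d - 2, by omega⟩
  have hsD' : (m:ℝ) ≤ s := by push_cast at hsD; linarith
  have hs2' : s^2 = 2*((m:ℝ)+2)^2 - 6*((m:ℝ)+2) + 5 := by push_cast at hs2; linarith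
  have hn : m + 2 - 1 = m + 1 := by omega
  have hA : (∑ k ∈ range (m+2-1), (w k * g k + w k * g (k+1)))
      = ∑ k ∈ range (m+2), c k * g k := by
    rw [hn, Finset.sum_add_distrib]
    have e1 : ∑ k ∈ range (m+1), w k * g k = ∑ k ∈ range (m+2), w k * g k := by
      conv_rhs => rw [Finset.sum_range_succ]
      have hw1 : w (m+1) = 0 := by simp only [hwdef]; push_cast; ring
      rw [hw1]; ring
    have e2 : ∑ k ∈ range (m+1), w k * g (k+1)
        = ∑ k ∈ range (m+2), (k:ℝ)*(((m:ℝ)+2)-(k:ℝ)) * g k := by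
      have hss := Finset.sum_range_succ' (fun k => (k:ℝ)*(((m:ℝ)+2)-(k:ℝ)) * g k) (m+1)
      rw [hss]
      have h0' : ((0:ℕ):ℝ)*(((m:ℝ)+2)-((0:ℕ):ℝ)) * g 0 = 0 := by push_cast; ring
      rw [h0', add_zero]
      refine Finset.sum_congr rfl fun k _ => ?_
      simp only [hwdef]; push_cast; ring
    rw [e1, e2, ← Finset.sum_add_distrib]
    refine Finset.sum_congr rfl fun k hk => ?_
    simp only [hcdef, hwdef]; push_cast; ring
  have hgsum : ∑ k ∈ range (m+2), g k = 1 := by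
    rw [← Fin.sum_univ_eq_sum_range g (m+2), ← h1]
    exact Finset.sum_congr rfl fun i _ => by rw [hgval i i.isLt]
  have hck : ∀ k ∈ range (m+2), 2*((m:ℝ)+2) - 3 - s ≤ c k := by
    intro k hk
    have hk' : k < m + 2 := Finset.mem_range.mp hk
    have hkm : (k:ℝ) ≤ (m:ℝ)+1 := by exact_mod_cast Nat.lt_succ_iff.mp hk'
    have := factA ((m:ℝ)+2) (k:ℝ) s (by positivity) (by linarith) (by linarith)
    simp only [hcdef]
    push_cast
    linarith
  have hdcast : ((m+2:ℕ):ℝ) = (m:ℝ)+2 := by push_cast; ring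
  by_cases hadj : ∃ p, p + 1 < m + 2 ∧ g p ≠ 0 ∧ g (p+1) ≠ 0
  · obtain ⟨p, hpd, hgp, hgp1⟩ := hadj
    have hsup : ∀ q, q ≠ p → q ≠ p+1 → g q = 0 := by
      intro q hq1 hq2
      by_cases hqd : q < m + 2
      · by_contra hgq
        have hP : lam ⟨p, by omega⟩ ≠ 0 := by rw [← hgval p (by omega)]; exact hgp
        have hP1 : lam ⟨p+1, hpd⟩ ≠ 0 := by rw [← hgval (p+1) hpd]; exact hgp1
        have hQ : lam ⟨q, hqd⟩ ≠ 0 := by rw [← hgval q hqd]; exact hgq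
        have hsub : ({⟨p, by omega⟩, ⟨p+1, hpd⟩, ⟨q, hqd⟩} : Finset (Fin (m+2)))
            ⊆ Finset.univ.filter fun k => lam k ≠ 0 := by
          intro x hx
          simp only [Finset.mem_insert, Finset.mem_singleton] at hx
          rcases hx with rfl | rfl | rfl <;> simp [Finset.mem_filter, hP, hP1, hQ]
        have hcard : ({⟨p, by omega⟩, ⟨p+1, hpd⟩, ⟨q, hqd⟩} : Finset (Fin (m+2))).card = 3 := by
          rw [Finset.card_insert_of_notMem, Finset.card_insert_of_notMem,
            Finset.card_singleton]
          · simp only [Finset.mem_singleton, Fin.mk.injEq]; omega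
          · simp only [Finset.mem_insert, Finset.mem_singleton, Fin.mk.injEq]; omega
        have := Finset.card_le_card hsub
        omega
      · simp [hgdef, hqd]
    have hpn : p ∈ range (m+2-1) := by rw [hn]; exact Finset.mem_range.mpr (by omega)
    have hC : ∑ k ∈ range (m+2-1), w k * (Real.sqrt (g k) * Real.sqrt (g (k+1)))
        = w p * (Real.sqrt (g p) * Real.sqrt (g (p+1))) := by
      refine Finset.sum_eq_single_of_mem p hpn fun k hk hne => ?_
      rcases lt_or_gt_of_ne hne with h | h
      · have hz : g k = 0 := hsup k (by omega) (by omega)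
        rw [hz, Real.sqrt_zero]; ring
      · have hz : g (k+1) = 0 := hsup (k+1) (by omega) (by omega)
        rw [hz, Real.sqrt_zero]; ring
    have hpair : ({p, p+1} : Finset ℕ) ⊆ range (m+2) := by
      intro x hx
      simp only [Finset.mem_insert, Finset.mem_singleton] at hx
      rcases hx with rfl | rfl <;> exact Finset.mem_range.mpr (by omega)
    have hzc : ∀ x ∈ range (m+2), x ∉ ({p, p+1} : Finset ℕ) → c x * g x = 0 := by
      intro x _ hx
      simp only [Finset.mem_insert, Finset.mem_singleton] at hx
      push_neg at hx
      rw [hsup x hx.1 hx.2]; ring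
    have hzg : ∀ x ∈ range (m+2), x ∉ ({p, p+1} : Finset ℕ) → g x = 0 := by
      intro x _ hx
      simp only [Finset.mem_insert, Finset.mem_singleton] at hx
      push_neg at hx
      exact hsup x hx.1 hx.2
    have hApq : ∑ k ∈ range (m+2), c k * g k = c p * g p + c (p+1) * g (p+1) := by
      rw [← Finset.sum_subset hpair hzc, Finset.sum_pair (by omega : p ≠ p+1)]
    have hgpq : g p + g (p+1) = 1 := by
      rw [← hgsum, ← Finset.sum_subset hpair hzg, Finset.sum_pair (by omega : p ≠ p+1)]
    have hpm : (p:ℝ) ≤ (m:ℝ) := by exact_mod_cast Nat.lt_succ_iff.mp (by omega : p < m+1)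
    have hcp : c p = (p:ℝ)*(((m:ℝ)+2)-(p:ℝ)) + ((p:ℝ)+1)*(((m:ℝ)+2)-(p:ℝ)-1) := by
      simp only [hcdef]; push_cast; ring
    have hcp1 : c (p+1) = ((p:ℝ)+1)*(((m:ℝ)+2)-(p:ℝ)-1) + ((p:ℝ)+2)*(((m:ℝ)+2)-(p:ℝ)-2) := by
      simp only [hcdef]; push_cast; ring
    have hwp : w p = ((p:ℝ)+1)*(((m:ℝ)+2)-(p:ℝ)-1) := by
      simp only [hwdef]; push_cast; ring
    have hw0 : 0 ≤ w p := by
      rw [hwp]; nlinarith [Nat.cast_nonneg (α := ℝ) p]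
    have hfB : (w p)^2 ≤ (c p - (2*((m:ℝ)+2)-3-s)) * (c (p+1) - (2*((m:ℝ)+2)-3-s)) := by
      rw [hcp, hcp1, hwp]
      exact factB ((m:ℝ)+2) (p:ℝ) s (Nat.cast_nonneg p) (by linarith) (by linarith) hs2'
    have hquad := quadPSD (c p - (2*((m:ℝ)+2)-3-s)) (c (p+1) - (2*((m:ℝ)+2)-3-s)) (w p)
      (Real.sqrt (g p)) (Real.sqrt (g (p+1)))
      (by have := hck p (Finset.mem_range.mpr (by omega)); linarith)
      (by have := hck (p+1) (Finset.mem_range.mpr (by omega)); linarith)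
      hfB hw0
    have hx2 : Real.sqrt (g p)^2 = g p := Real.sq_sqrt (hg0 p)
    have hy2 : Real.sqrt (g (p+1))^2 = g (p+1) := Real.sq_sqrt (hg0 (p+1))
    have hfin := finishIneq (c p) (c (p+1)) (w p) (2*((m:ℝ)+2)-3-s)
      (Real.sqrt (g p)) (Real.sqrt (g (p+1)))
      (by rw [hx2, hy2]; exact hgpq) hquad
    rw [hx2, hy2] at hfin
    rw [hsplit, hA, hC, hApq, hdcast]
    linarith [hfin]
  · push_neg at hadj
    have hC0 : ∑ k ∈ range (m+2-1), w k * (Real.sqrt (g k) * Real.sqrt (g (k+1))) = 0 := by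
      refine Finset.sum_eq_zero fun k hk => ?_
      rw [hn] at hk
      by_cases hgk : g k = 0
      · rw [hgk, Real.sqrt_zero]; ring
      · rw [hadj k (by have := Finset.mem_range.mp hk; omega) hgk, Real.sqrt_zero]; ring
    rw [hsplit, hA, hC0, hdcast]
    have heq : 2*((m:ℝ)+2) - 3 - s = ∑ k ∈ range (m+2), (2*((m:ℝ)+2) - 3 - s) * g k := by
      rw [← Finset.mul_sum, hgsum, mul_one]
    have hle : ∑ k ∈ range (m+2), (2*((m:ℝ)+2) - 3 - s) * g k
        ≤ ∑ k ∈ range (m+2), c k * g k :=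
      Finset.sum_le_sum fun k hk => mul_le_mul_of_nonneg_right (hck k hk) (hg0 k)
    linarith

private lemma keyId (D s : ℝ) (hs2 : s^2 = 2*D^2 - 6*D + 5) :
    (D-1)*((D-1) - (s-D+2))^2 + 2*(D-2)*(s-D+2)^2
      = (2*D-3-s)*((D-1)^2 + (s-D+2)^2) := by
  linear_combination (s + 2 - D) * hs2

private lemma existsOpt (d : ℕ) (hd : 2 ≤ d) (s : ℝ) (hs0 : 0 ≤ s)
    (hsD : (d:ℝ) - 2 ≤ s) (hs2 : s^2 = 2*(d:ℝ)^2 - 6*(d:ℝ) + 5) :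
    ∃ lam : Fin d → ℝ, (∀ k, 0 ≤ lam k) ∧ (∑ k, lam k = 1) ∧
      (Finset.univ.filter fun k => lam k ≠ 0).card ≤ 2 ∧
      spinVarSum d lam = 2*(d:ℝ) - 3 - s := by
  have hD : (2:ℝ) ≤ (d:ℝ) := by exact_mod_cast hd
  set a : ℝ := (d:ℝ) - 1 with hadef
  set b : ℝ := s - (d:ℝ) + 2 with hbdef
  have ha : 0 < a := by simp only [hadef]; linarith
  have hb : 0 ≤ b := by simp only [hbdef]; linarith
  set N : ℝ := a^2 + b^2 with hNdef
  have hN : 0 < N := by positivity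
  set f : ℕ → ℝ := fun k => if k = 0 then a^2/N else if k = 1 then b^2/N else 0 with hfdef
  set lam : Fin d → ℝ := fun k => f (k : ℕ) with hlamdef
  have hf0 : ∀ k, 0 ≤ f k := by
    intro k
    simp only [hfdef]
    split_ifs <;> positivity
  have hfsplit : ∀ k, f k = (if k = 0 then a^2/N else 0) + (if k = 1 then b^2/N else 0) := by
    intro k
    simp only [hfdef]
    rcases Nat.eq_zero_or_pos k with rfl | hk
    · simp
    · rcases Nat.lt_or_ge k 2 with hk2 | hk2
      · have : k = 1 := by omega
        subst this; simp
      · have h1 : k ≠ 0 := by omega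
        have h2 : k ≠ 1 := by omega
        simp [h1, h2]
  have hsumf : ∑ k ∈ range d, f k = 1 := by
    have : ∑ k ∈ range d, f k
        = ∑ k ∈ range d, ((if k = 0 then a^2/N else 0) + (if k = 1 then b^2/N else 0)) :=
      Finset.sum_congr rfl fun k _ => hfsplit k
    rw [this, Finset.sum_add_distrib, Finset.sum_ite_eq' (range d) 0 (fun _ => a^2/N),
      Finset.sum_ite_eq' (range d) 1 (fun _ => b^2/N)]
    have h0 : (0:ℕ) ∈ range d := Finset.mem_range.mpr (by omega)
    have h1 : (1:ℕ) ∈ range d := Finset.mem_range.mpr (by omega)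
    rw [if_pos h0, if_pos h1]
    field_simp
    exact hNdef.symm
  refine ⟨lam, fun k => hf0 _, ?_, ?_, ?_⟩
  · rw [hlamdef, Fin.sum_univ_eq_sum_range f d]; exact hsumf
  · have hsub : (Finset.univ.filter fun k => lam k ≠ 0)
        ⊆ {(⟨0, by omega⟩ : Fin d), ⟨1, by omega⟩} := by
      intro x hx
      have hx' : lam x ≠ 0 := (Finset.mem_filter.mp hx).2
      simp only [Finset.mem_insert, Finset.mem_singleton]
      by_contra hcon
      push_neg at hcon
      have h1 : (x:ℕ) ≠ 0 := fun h => hcon.1 (Fin.ext h)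
      have h2 : (x:ℕ) ≠ 1 := fun h => hcon.2 (Fin.ext h)
      apply hx'
      simp only [hlamdef, hfdef, h1, h2, if_false]
    calc (Finset.univ.filter fun k => lam k ≠ 0).card
        ≤ ({(⟨0, by omega⟩ : Fin d), ⟨1, by omega⟩} : Finset (Fin d)).card :=
          Finset.card_le_card hsub
      _ ≤ 2 := Finset.card_insert_le _ _ |>.trans (by simp)
  · -- value computation
    have hgf : ∀ k, (if h : k < d then lam ⟨k, h⟩ else 0) = f k := by
      intro k
      by_cases h : k < d
      · simp only [dif_pos h, hlamdef]
      · have h1 : k ≠ 0 := by omega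
        have h2 : k ≠ 1 := by omega
        simp only [dif_neg h, hfdef, h1, h2, if_false]
    have hsv : spinVarSum d lam = ∑ k ∈ range (d-1),
        ((k:ℝ)+1) * ((d:ℝ)-((k:ℝ)+1)) * (Real.sqrt (f k) - Real.sqrt (f (k+1)))^2 := by
      unfold spinVarSum
      exact Finset.sum_congr rfl fun k _ => by rw [hgf k, hgf (k+1)]
    set r : ℝ := Real.sqrt N with hrdef
    have hr0 : 0 < r := Real.sqrt_pos.mpr hN
    have hr2 : r^2 = N := Real.sq_sqrt hN.le
    have hsa : Real.sqrt (a^2/N) = a/r := by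
      rw [Real.sqrt_div (sq_nonneg a), Real.sqrt_sq ha.le]
    have hsb : Real.sqrt (b^2/N) = b/r := by
      rw [Real.sqrt_div (sq_nonneg b), Real.sqrt_sq hb]
    have hf0v : f 0 = a^2/N := by simp [hfdef]
    have hf1v : f 1 = b^2/N := by simp [hfdef]
    have hfz : ∀ k, 2 ≤ k → f k = 0 := by
      intro k hk
      have h1 : k ≠ 0 := by omega
      have h2 : k ≠ 1 := by omega
      simp [hfdef, h1, h2]
    obtain ⟨m, rfl⟩ : ∃ m, d = m + 2 := ⟨d - 2, by omega⟩
    have hn : m + 2 - 1 = m + 1 := by omega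
    have hkey : (((m:ℝ)+2)-1)*(a/r - b/r)^2 + 2*(((m:ℝ)+2)-2)*(b/r)^2
        = 2*((m:ℝ)+2) - 3 - s := by
      have hid := keyId ((m:ℝ)+2) s (by push_cast at hs2; linarith)
      have e : (a/r - b/r)^2 = (a-b)^2/N := by rw [div_sub_div_same, div_pow, hr2]
      have e2 : (b/r)^2 = b^2/N := by rw [div_pow, hr2]
      rw [e, e2]
      have hab : a = ((m:ℝ)+2) - 1 := by rw [hadef]; push_cast; ring
      have hbb : b = s - ((m:ℝ)+2) + 2 := by rw [hbdef]; push_cast; ring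
      have hNN : N = (((m:ℝ)+2)-1)^2 + (s-((m:ℝ)+2)+2)^2 := by
        rw [hNdef, hab, hbb]
      have hgoal : (((m:ℝ)+2)-1)*((a-b)^2) + 2*(((m:ℝ)+2)-2)*b^2
          = (2*((m:ℝ)+2)-3-s) * N := by
        rw [hab, hbb, hNN]; exact hid
      calc (((m:ℝ)+2)-1)*((a-b)^2/N) + 2*(((m:ℝ)+2)-2)*(b^2/N)
          = ((((m:ℝ)+2)-1)*((a-b)^2) + 2*(((m:ℝ)+2)-2)*b^2)/N := by ring
        _ = ((2*((m:ℝ)+2)-3-s) * N)/N := by rw [hgoal]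
        _ = 2*((m:ℝ)+2) - 3 - s := by field_simp
    rw [hsv, hn, Finset.sum_range_succ']
    rcases Nat.eq_zero_or_pos m with rfl | hm
    · rw [Finset.sum_range_zero, zero_add]
      have hf2 : f (0+1) = b^2/N := hf1v
      rw [hf0v, hf2, hsa, hsb]
      push_cast at hkey ⊢
      linear_combination hkey
    · obtain ⟨m', rfl⟩ : ∃ m', m = m' + 1 := ⟨m - 1, by omega⟩
      rw [Finset.sum_range_succ']
      have htail : ∑ k ∈ range m', (((k+1+1:ℕ):ℝ)+1) * ((((m'+1)+2:ℕ):ℝ)-(((k+1+1:ℕ):ℝ)+1))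
          * (Real.sqrt (f ((k+1)+1)) - Real.sqrt (f (((k+1)+1)+1)))^2 = 0 := by
        refine Finset.sum_eq_zero fun k _ => ?_
        rw [hfz (k+1+1) (by omega), hfz (k+1+1+1) (by omega), Real.sqrt_zero, sub_self]
        ring
      rw [htail, zero_add]
      have hf01 : f (0+1) = b^2/N := hf1v
      have hf11 : f (1+1) = 0 := hfz 2 le_rfl
      rw [hf0v, hf01, hf11, hsa, hsb, Real.sqrt_zero]
      push_cast at hkey ⊢
      linear_combination hkey

/-- For j ≥ 1/2 and d = 2j+1, B_{j,2} = 4j - 1 - √(1 - 4j + 8j²),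
where j = (d-1)/2. -/
theorem Bspin_two_closed_form
    (d : ℕ) (hd : 2 ≤ d) (j : ℝ) (hj : j = ((d : ℝ) - 1) / 2) :
    Bspin d 2 = 4 * j - 1 - Real.sqrt (1 - 4 * j + 8 * j ^ 2) := by
  subst hj
  have hD : (2:ℝ) ≤ (d:ℝ) := by exact_mod_cast hd
  have harg : 1 - 4 * (((d:ℝ)-1)/2) + 8 * (((d:ℝ)-1)/2)^2 = 2*(d:ℝ)^2 - 6*(d:ℝ) + 5 := by
    ring
  have hco : 4 * (((d:ℝ)-1)/2) - 1 = 2*(d:ℝ) - 3 := by ring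
  rw [harg, hco]
  set s := Real.sqrt (2*(d:ℝ)^2 - 6*(d:ℝ) + 5) with hsdef
  have hpos : (0:ℝ) ≤ 2*(d:ℝ)^2 - 6*(d:ℝ) + 5 := by nlinarith
  have hs0 : 0 ≤ s := Real.sqrt_nonneg _
  have hs2 : s^2 = 2*(d:ℝ)^2 - 6*(d:ℝ) + 5 := Real.sq_sqrt hpos
  have hsD : (d:ℝ) - 2 ≤ s := by nlinarith [hs0, hs2, sq_nonneg ((d:ℝ)-1)]
  obtain ⟨lam, hl0, hl1, hl2, hlv⟩ := existsOpt d hd s hs0 hsD hs2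
  have hmem : 2*(d:ℝ) - 3 - s ∈ { v : ℝ | ∃ lam : Fin d → ℝ, (∀ k, 0 ≤ lam k)
      ∧ (∑ k, lam k = 1) ∧ (Finset.univ.filter fun k => lam k ≠ 0).card ≤ 2
      ∧ v = spinVarSum d lam } := ⟨lam, hl0, hl1, hl2, hlv.symm⟩
  have hlb : ∀ v ∈ { v : ℝ | ∃ lam : Fin d → ℝ, (∀ k, 0 ≤ lam k)
      ∧ (∑ k, lam k = 1) ∧ (Finset.univ.filter fun k => lam k ≠ 0).card ≤ 2
      ∧ v = spinVarSum d lam }, 2*(d:ℝ) - 3 - s ≤ v := by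
    rintro v ⟨mu, hm0, hm1, hm2, rfl⟩
    exact lowerB d hd s hs0 hsD hs2 mu hm0 hm1 hm2
  unfold Bspin
  exact le_antisymm (csInf_le ⟨2*(d:ℝ)-3-s, hlb⟩ hmem) (le_csInf ⟨_, hmem⟩ hlb)
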